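/- For the normalized radial eigenfunctions eₙ(x) = sin(nπ|x|)/|x| on the unit ball B₃ ⊂ ℝ³, there is a constant C such that for all positive integers n, n₁, n₂, n₃: |∫_{B₃} eₙ e_{n₁} e_{n₂} e_{n₃} dx| ≤ C · min(n, n₁, n₂, n₃). -/

import Mathlib

open Real MeasureTheory intervalIntegral Set Filter Topology

-- generic boundedness → interval integrability
lemma intInt_of_bound {f : ℝ → ℝ} (hf : Measurable f) {C : ℝ} (h : ∀ r, |f r| ≤ C)
    (a b : ℝ) : IntervalIntegrable f volume a b := by
  rw [intervalIntegrable_iff]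
  exact MeasureTheory.Integrable.mono'
    (integrableOn_const measure_Ioc_lt_top.ne) hf.aestronglyMeasurable
    (ae_of_all _ h)

lemma sin_div_bound : ∀ u : ℝ, |Real.sin u / u| ≤ 1 := by
  intro u
  rcases eq_or_ne u 0 with rfl | hu
  · simp
  · rw [abs_div, div_le_one (abs_pos.2 hu)]
    exact Real.abs_sin_le_abs

lemma sin_div_meas : Measurable fun u : ℝ => Real.sin u / u :=
  Real.measurable_sin.div measurable_id

lemma sin_div_intInt (a b : ℝ) :
    IntervalIntegrable (fun u => Real.sin u / u) volume a b :=
  intInt_of_bound sin_div_meas sin_div_bound a b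

lemma div_le_div_of_nonneg_right'' {a b c : ℝ} (h : a ≤ b) (hc : 0 < c) : a / c ≤ b / c := by
  exact div_le_div_of_nonneg_right h (le_of_lt hc)

-- tail integration by parts bound
lemma si_tail (T S : ℝ) (hT : 1 ≤ T) (hTS : T ≤ S) :
    |∫ u in T..S, Real.sin u / u| ≤ 2 / T := by
  have hT0 : 0 < T := lt_of_lt_of_le one_pos hT
  have hS0 : 0 < S := lt_of_lt_of_le hT0 hTS
  have hne : ∀ u ∈ Set.uIcc T S, u ≠ 0 := by
    intro u hu
    rw [Set.uIcc_of_le hTS] at hu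
    exact (lt_of_lt_of_le hT0 hu.1).ne'
  -- derivative identity
  have hderiv : ∀ u ∈ Set.uIcc T S,
      HasDerivAt (fun v => -Real.cos v / v) (Real.sin u / u + Real.cos u / u ^ 2) u := by
    intro u hu
    have h1 := ((Real.hasDerivAt_cos u).neg).div (hasDerivAt_id u) (hne u hu)
    refine h1.congr_deriv ?_
    simp only [id, Pi.neg_apply]
    field_simp [hne u hu]
    ring
  have hint : IntervalIntegrable (fun u => Real.sin u / u + Real.cos u / u ^ 2)
      volume T S := by
    apply ContinuousOn.intervalIntegrable
    apply ContinuousOn.add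
    · exact (Real.continuous_sin.continuousOn).div continuousOn_id hne
    · exact (Real.continuous_cos.continuousOn).div
        (continuousOn_id.pow 2) (fun u hu => pow_ne_zero 2 (hne u hu))
  have hftc := intervalIntegral.integral_eq_sub_of_hasDerivAt hderiv hint
  have hsplit : (∫ u in T..S, (Real.sin u / u + Real.cos u / u ^ 2))
      = (∫ u in T..S, Real.sin u / u) + ∫ u in T..S, Real.cos u / u ^ 2 := by
    apply intervalIntegral.integral_add
    · exact sin_div_intInt T S
    · exact ContinuousOn.intervalIntegrable ((Real.continuous_cos.continuousOn).div
        (continuousOn_id.pow 2) (fun u hu => pow_ne_zero 2 (hne u hu)))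
  -- bound the cos integral
  have hcosb : |∫ u in T..S, Real.cos u / u ^ 2| ≤ 1 / T - 1 / S := by
    have h1 : |∫ u in T..S, Real.cos u / u ^ 2| ≤ ∫ u in T..S, 1 / u ^ 2 := by
      apply intervalIntegral.abs_integral_le_integral_abs hTS |>.trans
      apply intervalIntegral.integral_mono_on hTS
      · exact (ContinuousOn.intervalIntegrable ((Real.continuous_cos.continuousOn).div
          (continuousOn_id.pow 2) (fun u hu => pow_ne_zero 2 (hne u hu)))).abs
      · apply ContinuousOn.intervalIntegrable
        apply continuousOn_const.div (continuousOn_id.pow 2)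
        intro u hu
        rw [Set.uIcc_of_le hTS] at *
        exact pow_ne_zero 2 (lt_of_lt_of_le hT0 hu.1).ne'
      · intro u hu
        rw [abs_div, div_le_div_iff₀ (abs_pos.2 (pow_ne_zero 2 (lt_of_lt_of_le hT0 hu.1).ne'))
          (pow_pos (lt_of_lt_of_le hT0 hu.1) 2)]
        calc |Real.cos u| * u ^ 2 ≤ 1 * u ^ 2 := by
              apply mul_le_mul_of_nonneg_right (Real.abs_cos_le_one u) (sq_nonneg u)
          _ = 1 * |u ^ 2| := by rw [abs_of_nonneg (sq_nonneg u)]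
    have h2 : (∫ u in T..S, 1 / u ^ 2) = 1 / T - 1 / S := by
      have hd : ∀ u ∈ Set.uIcc T S, HasDerivAt (fun v => -(1 / v)) (1 / u ^ 2) u := by
        intro u hu
        have h1 := (hasDerivAt_inv (hne u hu)).neg
        rw [show (fun v : ℝ => -(1 / v)) = -fun y => y⁻¹ by funext v; simp [one_div]]
        refine h1.congr_deriv ?_
        rw [neg_neg, one_div]
      have hint2 : IntervalIntegrable (fun u => 1 / u ^ 2) volume T S := by
        apply ContinuousOn.intervalIntegrable
        exact continuousOn_const.div (continuousOn_id.pow 2)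
          (fun u hu => pow_ne_zero 2 (hne u hu))
      rw [intervalIntegral.integral_eq_sub_of_hasDerivAt hd hint2]
      ring
    linarith [h1]
  -- combine
  have key : (∫ u in T..S, Real.sin u / u)
      = (-Real.cos S / S - -Real.cos T / T) - ∫ u in T..S, Real.cos u / u ^ 2 := by
    rw [← hftc, hsplit]; ring
  rw [key]
  have hcs : |Real.cos S / S| ≤ 1 / S := by
    rw [abs_div, abs_of_pos hS0]
    exact div_le_div_of_nonneg_right'' (Real.abs_cos_le_one S) hS0
  have hct : |Real.cos T / T| ≤ 1 / T := by
    rw [abs_div, abs_of_pos hT0]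
    exact div_le_div_of_nonneg_right'' (Real.abs_cos_le_one T) hT0
  have hSS : 1 / S ≤ 1 / T := one_div_le_one_div_of_le hT0 hTS
  calc |(-Real.cos S / S - -Real.cos T / T) - ∫ u in T..S, Real.cos u / u ^ 2|
      ≤ |(-Real.cos S / S - -Real.cos T / T)| + |∫ u in T..S, Real.cos u / u ^ 2| :=
        abs_sub (G := ℝ) _ _
    _ ≤ (|(-Real.cos S / S)| + |(-Real.cos T / T)|) + (1 / T - 1 / S) := by
        exact add_le_add (abs_sub (G := ℝ) _ _) hcosb
    _ ≤ (1 / S + 1 / T) + (1 / T - 1 / S) := by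
        have e1 : |-Real.cos S / S| = |Real.cos S / S| := by rw [neg_div, abs_neg]
        have e2 : |-Real.cos T / T| = |Real.cos T / T| := by rw [neg_div, abs_neg]
        rw [e1, e2]
        linarith [hcs, hct]
    _ = 2 / T := by ring

lemma si_lim : ∃ L : ℝ, ∀ T : ℝ, 1 ≤ T →
    |(∫ u in (0:ℝ)..T, Real.sin u / u) - L| ≤ 2 / T := by
  set Si : ℝ → ℝ := fun T => ∫ u in (0:ℝ)..T, Real.sin u / u with hSi
  have hdiff : ∀ T S : ℝ, Si S - Si T = ∫ u in T..S, Real.sin u / u := by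
    intro T S
    rw [hSi]
    simp only
    rw [← intervalIntegral.integral_interval_sub_left (sin_div_intInt 0 S)
      (sin_div_intInt 0 T)]
  have habs : ∀ T S : ℝ, 1 ≤ T → T ≤ S → |Si S - Si T| ≤ 2 / T := by
    intro T S hT hTS
    rw [hdiff]
    exact si_tail T S hT hTS
  have hone : ∀ n : ℕ, (1:ℝ) ≤ (n : ℝ) + 1 := by
    intro n
    have : (0:ℝ) ≤ (n : ℝ) := Nat.cast_nonneg n
    linarith
  set s : ℕ → ℝ := fun n => Si ((n : ℝ) + 1) with hs
  have hcauchy : CauchySeq s := by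
    refine cauchySeq_of_le_tendsto_0 (fun N : ℕ => 2 / ((N : ℝ) + 1)) ?_ ?_
    · intro n m N hn hm
      rw [Real.dist_eq]
      have key : ∀ i j : ℕ, N ≤ i → i ≤ j → |s j - s i| ≤ 2 / ((N:ℝ) + 1) := by
        intro i j hi hij
        calc |s j - s i| ≤ 2 / ((i : ℝ) + 1) := by
              apply habs _ _ (hone i)
              have : (i:ℝ) ≤ (j:ℝ) := Nat.cast_le.2 hij
              linarith
          _ ≤ 2 / ((N : ℝ) + 1) := by
              apply div_le_div_of_nonneg_left (by norm_num) (by positivity)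
              have : (N : ℝ) ≤ (i : ℝ) := Nat.cast_le.2 hi
              linarith
      rcases le_total n m with h | h
      · rw [abs_sub_comm]; exact key n m hn h
      · exact key m n hm h
    · apply Filter.Tendsto.div_atTop (tendsto_const_nhds)
      exact Filter.tendsto_atTop_add_const_right _ 1 tendsto_natCast_atTop_atTop
  obtain ⟨L, hL⟩ := cauchySeq_tendsto_of_complete hcauchy
  refine ⟨L, fun T hT => ?_⟩
  have htend : Filter.Tendsto (fun n => |Si T - s n|) Filter.atTop (𝓝 |Si T - L|) :=
    ((tendsto_const_nhds.sub hL).abs)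
  have hfin : |Si T - L| ≤ 2 / T := by
    apply le_of_tendsto htend
    filter_upwards [Filter.eventually_ge_atTop ⌈T⌉₊] with n hn
    have hTn : T ≤ (n : ℝ) + 1 := by
      calc T ≤ (⌈T⌉₊ : ℝ) := Nat.le_ceil T
        _ ≤ (n : ℝ) := Nat.cast_le.2 hn
        _ ≤ (n : ℝ) + 1 := by linarith
    rw [abs_sub_comm]
    exact habs T ((n : ℝ) + 1) hT hTn
  exact hfin

lemma abs_cos_sub_one_le (x : ℝ) : |Real.cos x - 1| ≤ x ^ 2 / 2 := by
  rw [abs_sub_comm, abs_of_nonneg (by linarith [Real.cos_le_one x])]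
  linarith [Real.one_sub_sq_div_two_le_cos (x := x)]

lemma cos1_intInt (c : ℝ) :
    IntervalIntegrable (fun r => (Real.cos (c*r) - 1)/r^2) volume 0 1 := by
  have hm : Measurable (fun r : ℝ => (Real.cos (c*r) - 1)/r^2) := by
    apply Measurable.div
    · exact (Real.measurable_cos.comp (measurable_const.mul measurable_id)).sub measurable_const
    · exact measurable_id.pow measurable_const
  apply intInt_of_bound hm (C := c^2/2)
  intro r
  rcases eq_or_ne r 0 with rfl | hr
  · simpa using by positivity
  · rw [abs_div]
    rw [div_le_iff₀ (abs_pos.2 (pow_ne_zero 2 hr))]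
    calc |Real.cos (c*r) - 1| ≤ (c*r)^2/2 := abs_cos_sub_one_le (c*r)
      _ = c^2/2 * |r^2| := by rw [abs_of_nonneg (sq_nonneg r)]; ring

lemma sinr_intInt (c : ℝ) :
    IntervalIntegrable (fun r => Real.sin (c*r)/r) volume 0 1 := by
  have hm : Measurable (fun r : ℝ => Real.sin (c*r)/r) := by
    apply Measurable.div
    · exact Real.measurable_sin.comp (measurable_const.mul measurable_id)
    · exact measurable_id
  apply intInt_of_bound hm (C := |c|)
  intro r
  rcases eq_or_ne r 0 with rfl | hr
  · simp
  · rw [abs_div, div_le_iff₀ (abs_pos.2 hr)]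
    calc |Real.sin (c*r)| ≤ |c*r| := Real.abs_sin_le_abs
      _ = |c| * |r| := abs_mul c r

lemma sin_subst (c : ℝ) (hc : 0 < c) :
    (∫ r in (0:ℝ)..1, Real.sin (c*r)/r) = ∫ u in (0:ℝ)..c, Real.sin u / u := by
  have h := intervalIntegral.integral_comp_mul_left (a := (0:ℝ)) (b := 1)
    (fun u => Real.sin u / u) hc.ne'
  have hfun : (fun r : ℝ => Real.sin (c*r)/r) = fun r : ℝ => c * (Real.sin (c*r)/(c*r)) := by
    funext r
    rcases eq_or_ne r 0 with rfl | hr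
    · simp
    · field_simp
  rw [hfun]
  rw [intervalIntegral.integral_const_mul, h]
  rw [mul_zero, mul_one, smul_eq_mul]
  rw [← mul_assoc, mul_inv_cancel₀ hc.ne', one_mul]

lemma cos1_ibp (c : ℝ) (hc : 0 < c) :
    (∫ r in (0:ℝ)..1, (Real.cos (c*r) - 1)/r^2)
      = (1 - Real.cos c) - c * ∫ u in (0:ℝ)..c, Real.sin u / u := by
  set H : ℝ → ℝ := fun r => (Real.cos (c*r) - 1)/r with hH
  have hH0 : H 0 = 0 := by simp [hH]
  have hH1 : H 1 = Real.cos c - 1 := by simp [hH]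
  have hcont : ContinuousOn H (Set.Icc 0 1) := by
    intro x hx
    rcases eq_or_ne x 0 with rfl | hx0
    · -- continuity at 0 by squeeze
      have hb : ∀ r : ℝ, |H r| ≤ c^2/2 * |r| := by
        intro r
        rcases eq_or_ne r 0 with rfl | hr
        · simp [hH0]
        · rw [hH]
          simp only
          rw [abs_div, div_le_iff₀ (abs_pos.2 hr)]
          calc |Real.cos (c*r) - 1| ≤ (c*r)^2/2 := abs_cos_sub_one_le (c*r)
            _ = c^2/2 * |r| * |r| := by
                rw [mul_assoc, abs_mul_abs_self]
                ring
      have ht : Filter.Tendsto H (nhdsWithin 0 (Set.Icc 0 1)) (𝓝 0) := by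
        apply squeeze_zero_norm (fun r => hb r)
        have : Filter.Tendsto (fun r : ℝ => c^2/2 * |r|) (𝓝 0) (𝓝 (c^2/2 * |(0:ℝ)|)) := by
          exact (continuous_const.mul continuous_abs).tendsto 0
        simpa using this.mono_left nhdsWithin_le_nhds
      unfold ContinuousWithinAt
      rw [hH0]
      exact ht
    · apply ContinuousWithinAt.congr_of_eventuallyEq
        (f := fun r => (Real.cos (c*r) - 1)/r)
      · exact ((Real.continuous_cos.comp (continuous_const.mul continuous_id)).sub
          continuous_const).continuousAt.continuousWithinAt.div
          continuousAt_id.continuousWithinAt hx0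
      · exact Filter.Eventually.of_forall (fun y => rfl)
      · rfl
  have hderiv : ∀ x ∈ Set.Ioo (0:ℝ) 1, HasDerivWithinAt H
      (-(c * Real.sin (c*x))/x - (Real.cos (c*x) - 1)/x^2) (Set.Ioi x) x := by
    intro x hx
    have hx0 : x ≠ 0 := hx.1.ne'
    have h1 : HasDerivAt (fun r => Real.cos (c*r) - 1) (-(c * Real.sin (c*x))) x := by
      have := (Real.hasDerivAt_cos (c*x)).comp x ((hasDerivAt_id x).const_mul c)
      simpa [mul_comm] using this.sub_const 1
    have h2 := h1.div (hasDerivAt_id x) hx0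
    apply HasDerivAt.hasDerivWithinAt
    refine h2.congr_deriv ?_
    simp only [id]
    field_simp
  have hint : IntervalIntegrable
      (fun x => -(c * Real.sin (c*x))/x - (Real.cos (c*x) - 1)/x^2) volume 0 1 := by
    have e : (fun x => -(c * Real.sin (c*x))/x - (Real.cos (c*x) - 1)/x^2)
        = fun x => (-c) * (Real.sin (c*x)/x) - (Real.cos (c*x) - 1)/x^2 := by
      funext x; ring
    rw [e]
    exact ((sinr_intInt c).const_mul (-c)).sub (cos1_intInt c)
  have hftc := intervalIntegral.integral_eq_sub_of_hasDeriv_right_of_le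
    (by norm_num) hcont hderiv hint
  rw [hH1, hH0, sub_zero] at hftc
  have hsplit : (∫ x in (0:ℝ)..1, (-(c * Real.sin (c*x))/x - (Real.cos (c*x) - 1)/x^2))
      = (-c) * (∫ x in (0:ℝ)..1, Real.sin (c*x)/x)
        - ∫ x in (0:ℝ)..1, (Real.cos (c*x) - 1)/x^2 := by
    have e : (fun x => -(c * Real.sin (c*x))/x - (Real.cos (c*x) - 1)/x^2)
        = fun x => (-c) * (Real.sin (c*x)/x) - (Real.cos (c*x) - 1)/x^2 := by
      funext x; ring
    rw [e, intervalIntegral.integral_sub (((sinr_intInt c).const_mul (-c))) (cos1_intInt c),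
      intervalIntegral.integral_const_mul]
  rw [hsplit] at hftc
  rw [sin_subst c hc] at hftc
  linarith [hftc]

-- the key bound on φ(k) = ∫₀¹ (cos(kπr)-1)/r² dr
lemma phi_bound : ∃ L : ℝ, ∀ k : ℕ,
    |(∫ r in (0:ℝ)..1, (Real.cos ((k:ℝ)*π*r) - 1)/r^2) + π*L*k| ≤ 4 := by
  obtain ⟨L, hL⟩ := si_lim
  refine ⟨L, fun k => ?_⟩
  rcases Nat.eq_zero_or_pos k with rfl | hk
  · simp
  · have hkπ : (0:ℝ) < (k:ℝ)*π := by positivity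
    have h1 : (1:ℝ) ≤ (k:ℝ)*π := by
      calc (1:ℝ) ≤ π := by linarith [Real.pi_gt_three]
        _ = 1 * π := (one_mul π).symm
        _ ≤ (k:ℝ)*π := by
            apply mul_le_mul_of_nonneg_right _ Real.pi_pos.le
            exact_mod_cast hk
    have hibp := cos1_ibp ((k:ℝ)*π) hkπ
    have hsi := hL ((k:ℝ)*π) h1
    set Si := ∫ u in (0:ℝ)..((k:ℝ)*π), Real.sin u / u
    have e : (∫ r in (0:ℝ)..1, (Real.cos ((k:ℝ)*π*r) - 1)/r^2) + π*L*k
        = (1 - Real.cos ((k:ℝ)*π)) - ((k:ℝ)*π) * (Si - L) := by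
      rw [show (fun r : ℝ => (Real.cos ((k:ℝ)*π*r) - 1)/r^2)
          = fun r : ℝ => (Real.cos (((k:ℝ)*π)*r) - 1)/r^2 by funext r; ring_nf] at *
      rw [hibp]; ring
    rw [e]
    have hcos : |1 - Real.cos ((k:ℝ)*π)| ≤ 2 := by
      rw [abs_le]
      constructor <;> [linarith [Real.cos_le_one ((k:ℝ)*π)];
        linarith [Real.neg_one_le_cos ((k:ℝ)*π)]]
    calc |(1 - Real.cos ((k:ℝ)*π)) - ((k:ℝ)*π) * (Si - L)|
        ≤ |1 - Real.cos ((k:ℝ)*π)| + |((k:ℝ)*π) * (Si - L)| := abs_sub _ _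
      _ ≤ 2 + |((k:ℝ)*π)| * |Si - L| := by rw [abs_mul]; linarith
      _ ≤ 2 + ((k:ℝ)*π) * (2 / ((k:ℝ)*π)) := by
          apply add_le_add le_rfl
          rw [abs_of_pos hkπ]
          exact mul_le_mul_of_nonneg_left hsi hkπ.le
      _ = 2 + ((k:ℝ)*π) * (2 / ((k:ℝ)*π)) := rfl
      _ = 4 := by rw [mul_div_cancel₀ _ hkπ.ne']; norm_num

lemma four_sin (A B C D : ℝ) :
    Real.sin A * Real.sin B * Real.sin C * Real.sin D
      = (1/8)*(Real.cos (A-B-C+D) + Real.cos (A-B+C-D) - Real.cos (A-B-C-D)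
        - Real.cos (A-B+C+D) - Real.cos (A+B-C+D) - Real.cos (A+B+C-D)
        + Real.cos (A+B-C-D) + Real.cos (A+B+C+D)) := by
  simp only [Real.cos_add, Real.cos_sub, Real.sin_add, Real.sin_sub]
  ring

-- the combinatorial pairing bound
lemma signed_abs_bound (a b c d : ℝ) (ha : 0 ≤ a) (hb : 0 ≤ b) (hc : 0 ≤ c) (hd : 0 ≤ d) :
    |(|a-b-c+d| + |a-b+c-d| - |a-b-c-d| - |a-b+c+d| - |a+b-c+d| - |a+b+c-d|
      + |a+b-c-d| + |a+b+c+d|)|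
      ≤ 8 * min (min a b) (min c d) := by
  have keyD : ∀ u v t : ℝ, 0 ≤ t → u - v = 2*t → |u| - |v| ≤ 2*t ∧ -(2*t) ≤ |u| - |v| := by
    intro u v t ht huv
    have h := abs_abs_sub_abs_le_abs_sub u v
    rw [huv, abs_of_nonneg (a := 2*t) (by linarith)] at h
    exact ⟨(abs_le.1 h).2, (abs_le.1 h).1⟩
  have keyS : ∀ u v t : ℝ, 0 ≤ t → u + v = 2*t → |u| - |v| ≤ 2*t ∧ -(2*t) ≤ |u| - |v| := by
    intro u v t ht huv
    have h := abs_abs_sub_abs_le_abs_sub u (-v)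
    rw [abs_neg, sub_neg_eq_add, huv, abs_of_nonneg (a := 2*t) (by linarith)] at h
    exact ⟨(abs_le.1 h).2, (abs_le.1 h).1⟩
  have hA : |(|a-b-c+d| + |a-b+c-d| - |a-b-c-d| - |a-b+c+d| - |a+b-c+d| - |a+b+c-d|
      + |a+b-c-d| + |a+b+c+d|)| ≤ 8*a := by
    obtain ⟨p1, q1⟩ := keyS (a+b+c+d) (a-b-c-d) a ha (by ring)
    obtain ⟨p2, q2⟩ := keyS (a-b-c+d) (a+b+c-d) a ha (by ring)
    obtain ⟨p3, q3⟩ := keyS (a-b+c-d) (a+b-c+d) a ha (by ring)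
    obtain ⟨p4, q4⟩ := keyS (a+b-c-d) (a-b+c+d) a ha (by ring)
    rw [abs_le]; constructor <;> linarith
  have hB : |(|a-b-c+d| + |a-b+c-d| - |a-b-c-d| - |a-b+c+d| - |a+b-c+d| - |a+b+c-d|
      + |a+b-c-d| + |a+b+c+d|)| ≤ 8*b := by
    obtain ⟨p1, q1⟩ := keyD (a+b+c+d) (a-b+c+d) b hb (by ring)
    obtain ⟨p2, q2⟩ := keyD (a+b+c-d) (a-b+c-d) b hb (by ring)
    obtain ⟨p3, q3⟩ := keyD (a+b-c+d) (a-b-c+d) b hb (by ring)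
    obtain ⟨p4, q4⟩ := keyD (a+b-c-d) (a-b-c-d) b hb (by ring)
    rw [abs_le]; constructor <;> linarith
  have hC : |(|a-b-c+d| + |a-b+c-d| - |a-b-c-d| - |a-b+c+d| - |a+b-c+d| - |a+b+c-d|
      + |a+b-c-d| + |a+b+c+d|)| ≤ 8*c := by
    obtain ⟨p1, q1⟩ := keyD (a+b+c+d) (a+b-c+d) c hc (by ring)
    obtain ⟨p2, q2⟩ := keyD (a+b+c-d) (a+b-c-d) c hc (by ring)
    obtain ⟨p3, q3⟩ := keyD (a-b+c+d) (a-b-c+d) c hc (by ring)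
    obtain ⟨p4, q4⟩ := keyD (a-b+c-d) (a-b-c-d) c hc (by ring)
    rw [abs_le]; constructor <;> linarith
  have hD : |(|a-b-c+d| + |a-b+c-d| - |a-b-c-d| - |a-b+c+d| - |a+b-c+d| - |a+b+c-d|
      + |a+b-c-d| + |a+b+c+d|)| ≤ 8*d := by
    obtain ⟨p1, q1⟩ := keyD (a+b+c+d) (a+b+c-d) d hd (by ring)
    obtain ⟨p2, q2⟩ := keyD (a+b-c+d) (a+b-c-d) d hd (by ring)
    obtain ⟨p3, q3⟩ := keyD (a-b+c+d) (a-b+c-d) d hd (by ring)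
    obtain ⟨p4, q4⟩ := keyD (a-b-c+d) (a-b-c-d) d hd (by ring)
    rw [abs_le]; constructor <;> linarith
  rcases min_cases (min a b) (min c d) with ⟨h, _⟩ | ⟨h, _⟩ <;> rw [h]
  · rcases min_cases a b with ⟨h2, _⟩ | ⟨h2, _⟩ <;> rw [h2] <;> assumption
  · rcases min_cases c d with ⟨h2, _⟩ | ⟨h2, _⟩ <;> rw [h2] <;> assumption

lemma cos_int_abs (z : ℤ) :
    (∫ r in (0:ℝ)..1, (Real.cos ((z:ℝ)*π*r) - 1)/r^2)
      = ∫ r in (0:ℝ)..1, (Real.cos (((z.natAbs:ℕ):ℝ)*π*r) - 1)/r^2 := by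
  have h : ∀ r : ℝ, Real.cos ((z:ℝ)*π*r) = Real.cos (((z.natAbs:ℕ):ℝ)*π*r) := by
    intro r
    have e : ((z.natAbs:ℕ):ℝ) = |(z:ℝ)| := by
      rw [Nat.cast_natAbs]
      push_cast
      ring
    rw [e]
    rcases abs_cases ((z:ℝ)) with ⟨h1, _⟩ | ⟨h1, _⟩
    · rw [h1]
    · rw [h1, show -(z:ℝ)*π*r = -((z:ℝ)*π*r) by ring, Real.cos_neg]
  simp only [h]

set_option maxHeartbeats 2000000 in
lemma oneD : ∃ C₁ : ℝ, 0 < C₁ ∧ ∀ a b c d : ℕ, 1 ≤ a → 1 ≤ b → 1 ≤ c → 1 ≤ d →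
    |∫ r in (0:ℝ)..1,
        (Real.sin ((a:ℝ)*π*r) * Real.sin ((b:ℝ)*π*r) * Real.sin ((c:ℝ)*π*r)
          * Real.sin ((d:ℝ)*π*r))/r^2|
      ≤ C₁ * min (min (a:ℝ) (b:ℝ)) (min (c:ℝ) (d:ℝ)) := by
  obtain ⟨L, hL⟩ := phi_bound
  refine ⟨π * |L| + 4, by positivity, fun a b c d ha hb hc hd => ?_⟩
  set A := (a:ℝ); set B := (b:ℝ); set C := (c:ℝ); set D := (d:ℝ)
  have hA : 1 ≤ A := Nat.one_le_cast.2 ha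
  have hB : 1 ≤ B := Nat.one_le_cast.2 hb
  have hC : 1 ≤ C := Nat.one_le_cast.2 hc
  have hD : 1 ≤ D := Nat.one_le_cast.2 hd
  -- pointwise expansion
  have hpt : (fun r : ℝ => (Real.sin (A*π*r) * Real.sin (B*π*r) * Real.sin (C*π*r)
      * Real.sin (D*π*r))/r^2)
      = fun r : ℝ => (1/8) * ((Real.cos ((A-B-C+D)*π*r) - 1)/r^2
        + (Real.cos ((A-B+C-D)*π*r) - 1)/r^2
        - (Real.cos ((A-B-C-D)*π*r) - 1)/r^2
        - (Real.cos ((A-B+C+D)*π*r) - 1)/r^2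
        - (Real.cos ((A+B-C+D)*π*r) - 1)/r^2
        - (Real.cos ((A+B+C-D)*π*r) - 1)/r^2
        + (Real.cos ((A+B-C-D)*π*r) - 1)/r^2
        + (Real.cos ((A+B+C+D)*π*r) - 1)/r^2) := by
    funext r
    have h4 := four_sin (A*π*r) (B*π*r) (C*π*r) (D*π*r)
    rw [show A*π*r - B*π*r - C*π*r + D*π*r = (A-B-C+D)*π*r by ring,
        show A*π*r - B*π*r + C*π*r - D*π*r = (A-B+C-D)*π*r by ring,
        show A*π*r - B*π*r - C*π*r - D*π*r = (A-B-C-D)*π*r by ring,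
        show A*π*r - B*π*r + C*π*r + D*π*r = (A-B+C+D)*π*r by ring,
        show A*π*r + B*π*r - C*π*r + D*π*r = (A+B-C+D)*π*r by ring,
        show A*π*r + B*π*r + C*π*r - D*π*r = (A+B+C-D)*π*r by ring,
        show A*π*r + B*π*r - C*π*r - D*π*r = (A+B-C-D)*π*r by ring,
        show A*π*r + B*π*r + C*π*r + D*π*r = (A+B+C+D)*π*r by ring] at h4
    rw [h4]
    ring
  rw [hpt]
  have i1 := cos1_intInt ((A-B-C+D)*π)
  have i2 := cos1_intInt ((A-B+C-D)*π)
  have i3 := cos1_intInt ((A-B-C-D)*π)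
  have i4 := cos1_intInt ((A-B+C+D)*π)
  have i5 := cos1_intInt ((A+B-C+D)*π)
  have i6 := cos1_intInt ((A+B+C-D)*π)
  have i7 := cos1_intInt ((A+B-C-D)*π)
  have i8 := cos1_intInt ((A+B+C+D)*π)
  rw [intervalIntegral.integral_const_mul,
    intervalIntegral.integral_add ((((((i1.add i2).sub i3).sub i4).sub i5).sub i6).add i7) i8,
    intervalIntegral.integral_add (((((i1.add i2).sub i3).sub i4).sub i5).sub i6) i7,
    intervalIntegral.integral_sub ((((i1.add i2).sub i3).sub i4).sub i5) i6,
    intervalIntegral.integral_sub (((i1.add i2).sub i3).sub i4) i5,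
    intervalIntegral.integral_sub ((i1.add i2).sub i3) i4,
    intervalIntegral.integral_sub (i1.add i2) i3,
    intervalIntegral.integral_add i1 i2]
  -- continue
  have natAbs_cast : ∀ z : ℤ, ((z.natAbs:ℕ):ℝ) = |(z:ℝ)| := by
    intro z
    rw [Nat.cast_natAbs]
    push_cast
    ring
  have key : ∀ z : ℤ,
      abs ((∫ r in (0:ℝ)..1, (Real.cos ((z:ℝ)*π*r) - 1)/r^2) + π*L*|(z:ℝ)|) ≤ 4 := by
    intro z
    rw [cos_int_abs, natAbs_cast z]
    have h := hL z.natAbs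
    rwa [natAbs_cast z] at h
  have e1 : (((a:ℤ) - b - c + d : ℤ):ℝ) = A-B-C+D := by push_cast; ring
  have e2 : (((a:ℤ) - b + c - d : ℤ):ℝ) = A-B+C-D := by push_cast; ring
  have e3 : (((a:ℤ) - b - c - d : ℤ):ℝ) = A-B-C-D := by push_cast; ring
  have e4 : (((a:ℤ) - b + c + d : ℤ):ℝ) = A-B+C+D := by push_cast; ring
  have e5 : (((a:ℤ) + b - c + d : ℤ):ℝ) = A+B-C+D := by push_cast; ring
  have e6 : (((a:ℤ) + b + c - d : ℤ):ℝ) = A+B+C-D := by push_cast; ring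
  have e7 : (((a:ℤ) + b - c - d : ℤ):ℝ) = A+B-C-D := by push_cast; ring
  have e8 : (((a:ℤ) + b + c + d : ℤ):ℝ) = A+B+C+D := by push_cast; ring
  have k1 := key ((a:ℤ) - b - c + d); rw [e1] at k1
  have k2 := key ((a:ℤ) - b + c - d); rw [e2] at k2
  have k3 := key ((a:ℤ) - b - c - d); rw [e3] at k3
  have k4 := key ((a:ℤ) - b + c + d); rw [e4] at k4
  have k5 := key ((a:ℤ) + b - c + d); rw [e5] at k5
  have k6 := key ((a:ℤ) + b + c - d); rw [e6] at k6
  have k7 := key ((a:ℤ) + b - c - d); rw [e7] at k7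
  have k8 := key ((a:ℤ) + b + c + d); rw [e8] at k8
  have hS := signed_abs_bound A B C D (by linarith) (by linarith) (by linarith) (by linarith)
  set t := min (min A B) (min C D) with hts
  have ht1 : 1 ≤ t := le_min (le_min hA hB) (le_min hC hD)
  set S := |A-B-C+D| + |A-B+C-D| - |A-B-C-D| - |A-B+C+D| - |A+B-C+D| - |A+B+C-D|
      + |A+B-C-D| + |A+B+C+D| with hSdef
  set I1 := ∫ r in (0:ℝ)..1, (Real.cos ((A-B-C+D)*π*r) - 1)/r^2 with hI1
  set I2 := ∫ r in (0:ℝ)..1, (Real.cos ((A-B+C-D)*π*r) - 1)/r^2 with hI2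
  set I3 := ∫ r in (0:ℝ)..1, (Real.cos ((A-B-C-D)*π*r) - 1)/r^2 with hI3
  set I4 := ∫ r in (0:ℝ)..1, (Real.cos ((A-B+C+D)*π*r) - 1)/r^2 with hI4
  set I5 := ∫ r in (0:ℝ)..1, (Real.cos ((A+B-C+D)*π*r) - 1)/r^2 with hI5
  set I6 := ∫ r in (0:ℝ)..1, (Real.cos ((A+B+C-D)*π*r) - 1)/r^2 with hI6
  set I7 := ∫ r in (0:ℝ)..1, (Real.cos ((A+B-C-D)*π*r) - 1)/r^2 with hI7
  set I8 := ∫ r in (0:ℝ)..1, (Real.cos ((A+B+C+D)*π*r) - 1)/r^2 with hI8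
  have main : 1/8 * (I1 + I2 - I3 - I4 - I5 - I6 + I7 + I8)
      = (1/8) * ((I1 + π*L*|A-B-C+D|) + (I2 + π*L*|A-B+C-D|) - (I3 + π*L*|A-B-C-D|)
        - (I4 + π*L*|A-B+C+D|) - (I5 + π*L*|A+B-C+D|) - (I6 + π*L*|A+B+C-D|)
        + (I7 + π*L*|A+B-C-D|) + (I8 + π*L*|A+B+C+D|)) - (π*L/8) * S := by
    rw [hSdef]; ring
  have hX : |(1/8) * ((I1 + π*L*|A-B-C+D|) + (I2 + π*L*|A-B+C-D|) - (I3 + π*L*|A-B-C-D|)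
        - (I4 + π*L*|A-B+C+D|) - (I5 + π*L*|A+B-C+D|) - (I6 + π*L*|A+B+C-D|)
        + (I7 + π*L*|A+B-C-D|) + (I8 + π*L*|A+B+C+D|))| ≤ 4 := by
    obtain ⟨p1, q1⟩ := abs_le.1 k1
    obtain ⟨p2, q2⟩ := abs_le.1 k2
    obtain ⟨p3, q3⟩ := abs_le.1 k3
    obtain ⟨p4, q4⟩ := abs_le.1 k4
    obtain ⟨p5, q5⟩ := abs_le.1 k5
    obtain ⟨p6, q6⟩ := abs_le.1 k6
    obtain ⟨p7, q7⟩ := abs_le.1 k7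
    obtain ⟨p8, q8⟩ := abs_le.1 k8
    rw [abs_le]; constructor <;> linarith
  have hY : |(π*L/8) * S| ≤ π * |L| * t := by
    rw [abs_mul]
    calc |π*L/8| * |S| ≤ |π*L/8| * (8*t) :=
          mul_le_mul_of_nonneg_left hS (abs_nonneg _)
      _ = π * |L| * t := by
          rw [abs_div, abs_mul, abs_of_pos Real.pi_pos, abs_of_pos (by norm_num : (0:ℝ) < 8)]
          ring
  calc |1/8 * (I1 + I2 - I3 - I4 - I5 - I6 + I7 + I8)|
      ≤ 4 + π * |L| * t := by
        rw [main]
        exact le_trans (abs_sub _ _) (add_le_add hX hY)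
    _ ≤ (π * |L| + 4) * t := by nlinarith [Real.pi_pos, abs_nonneg L, mul_le_mul_of_nonneg_left ht1 (by positivity : (0:ℝ) ≤ π*|L|)]

lemma pnat_min_coe (x y : ℕ+) : ((min x y : ℕ+) : ℕ) = min (x:ℕ) (y:ℕ) := by
  rcases le_total x y with h | h
  · rw [min_eq_left h, min_eq_left ((PNat.coe_le_coe _ _).2 h)]
  · rw [min_eq_right h, min_eq_right ((PNat.coe_le_coe _ _).2 h)]

/-- For the radial eigenfunctions `eₙ(x) = sin(nπ|x|)/|x|` on the unit ball
`B₃ ⊂ ℝ³`, there is a constant `C` such that for all positive integers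
`n, n₁, n₂, n₃`, `|∫_{B₃} eₙ e_{n₁} e_{n₂} e_{n₃} dx| ≤ C · min(n,n₁,n₂,n₃)`. -/
theorem eigenfunction_product_bound :
    ∃ C : ℝ, 0 < C ∧ ∀ n n₁ n₂ n₃ : ℕ+,
      |∫ x in Metric.ball (0 : EuclideanSpace ℝ (Fin 3)) 1,
          (Real.sin ((n : ℝ) * π * ‖x‖) / ‖x‖) *
          (Real.sin ((n₁ : ℝ) * π * ‖x‖) / ‖x‖) *
          (Real.sin ((n₂ : ℝ) * π * ‖x‖) / ‖x‖) *
          (Real.sin ((n₃ : ℝ) * π * ‖x‖) / ‖x‖)|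
        ≤ C * ((min (min n n₁) (min n₂ n₃) : ℕ+) : ℝ) := by
  obtain ⟨C₁, hC₁, h1⟩ := oneD
  set v := (volume (Metric.ball (0 : EuclideanSpace ℝ (Fin 3)) 1)).toReal with hv
  have hvpos : 0 < v := by
    apply ENNReal.toReal_pos
    · exact (Metric.measure_ball_pos volume 0 one_pos).ne'
    · exact measure_ball_lt_top.ne
  refine ⟨3 * v * C₁, by positivity, fun n n₁ n₂ n₃ => ?_⟩
  set a : ℕ := (n:ℕ) with hadef; set b : ℕ := (n₁:ℕ) with hbdef; set c : ℕ := (n₂:ℕ) with hcdef; set d : ℕ := (n₃:ℕ) with hddef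
  set F : ℝ → ℝ := fun t => (Real.sin ((a:ℝ)*π*t)/t) * (Real.sin ((b:ℝ)*π*t)/t)
    * (Real.sin ((c:ℝ)*π*t)/t) * (Real.sin ((d:ℝ)*π*t)/t) with hF
  have step1 : (∫ x in Metric.ball (0 : EuclideanSpace ℝ (Fin 3)) 1,
          (Real.sin ((n : ℝ) * π * ‖x‖) / ‖x‖) *
          (Real.sin ((n₁ : ℝ) * π * ‖x‖) / ‖x‖) *
          (Real.sin ((n₂ : ℝ) * π * ‖x‖) / ‖x‖) *
          (Real.sin ((n₃ : ℝ) * π * ‖x‖) / ‖x‖))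
      = ∫ x : EuclideanSpace ℝ (Fin 3), (Set.Iio (1:ℝ)).indicator F ‖x‖ := by
    rw [← MeasureTheory.integral_indicator measurableSet_ball]
    congr 1
    funext x
    by_cases h : ‖x‖ < 1
    · rw [Set.indicator_of_mem (mem_ball_zero_iff.2 h),
        Set.indicator_of_mem (Set.mem_Iio.2 h)]
    · rw [Set.indicator_of_notMem (fun hx => h (mem_ball_zero_iff.1 hx)),
        Set.indicator_of_notMem (fun hx => h (Set.mem_Iio.1 hx))]
  have step2 := MeasureTheory.integral_fun_norm_addHaar
    (volume : Measure (EuclideanSpace ℝ (Fin 3))) ((Set.Iio (1:ℝ)).indicator F)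
  rw [finrank_euclideanSpace_fin] at step2
  have step3 : (∫ y in Set.Ioi (0:ℝ), y ^ (3-1) • (Set.Iio (1:ℝ)).indicator F y)
      = ∫ r in (0:ℝ)..1, (Real.sin ((a:ℝ)*π*r) * Real.sin ((b:ℝ)*π*r)
          * Real.sin ((c:ℝ)*π*r) * Real.sin ((d:ℝ)*π*r))/r^2 := by
    have e1 : (fun y : ℝ => y ^ (3-1) • (Set.Iio (1:ℝ)).indicator F y)
        = (Set.Iio (1:ℝ)).indicator (fun y => (Real.sin ((a:ℝ)*π*y) * Real.sin ((b:ℝ)*π*y)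
          * Real.sin ((c:ℝ)*π*y) * Real.sin ((d:ℝ)*π*y))/y^2) := by
      funext y
      by_cases h : y ∈ Set.Iio (1:ℝ)
      · rw [Set.indicator_of_mem h, Set.indicator_of_mem h, smul_eq_mul, hF]
        simp only
        rcases eq_or_ne y 0 with rfl | hy
        · norm_num
        · field_simp
      · rw [Set.indicator_of_notMem h, Set.indicator_of_notMem h, smul_zero]
    rw [e1, MeasureTheory.integral_indicator measurableSet_Iio,
      MeasureTheory.Measure.restrict_restrict measurableSet_Iio,
      show Set.Iio (1:ℝ) ∩ Set.Ioi 0 = Set.Ioo 0 1 by rw [Set.inter_comm, Set.Ioi_inter_Iio],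
      intervalIntegral.integral_of_le (by norm_num : (0:ℝ) ≤ 1),
      MeasureTheory.integral_Ioc_eq_integral_Ioo]
  have hmin : ((min (min n n₁) (min n₂ n₃) : ℕ+) : ℝ)
      = min (min (a:ℝ) (b:ℝ)) (min (c:ℝ) (d:ℝ)) := by
    have : ((min (min n n₁) (min n₂ n₃) : ℕ+) : ℕ) = min (min a b) (min c d) := by
      rw [pnat_min_coe, pnat_min_coe, pnat_min_coe]
    rw [this]
    push_cast [Nat.cast_min]
    ring_nf
  rw [step1, step2, step3, hmin, nsmul_eq_mul, smul_eq_mul, measureReal_def, ← hv]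
  rw [show ((3:ℕ):ℝ) = 3 by norm_num]
  rw [abs_mul, abs_mul, abs_of_nonneg (by norm_num : (0:ℝ) ≤ 3), abs_of_nonneg hvpos.le]
  calc 3 * (v * |∫ r in (0:ℝ)..1, (Real.sin ((a:ℝ)*π*r) * Real.sin ((b:ℝ)*π*r)
          * Real.sin ((c:ℝ)*π*r) * Real.sin ((d:ℝ)*π*r))/r^2|)
      ≤ 3 * (v * (C₁ * min (min (a:ℝ) (b:ℝ)) (min (c:ℝ) (d:ℝ)))) := by
        apply mul_le_mul_of_nonneg_left _ (by norm_num : (0:ℝ) ≤ 3)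
        apply mul_le_mul_of_nonneg_left _ hvpos.le
        exact h1 a b c d n.one_le n₁.one_le n₂.one_le n₃.one_le
    _ = 3 * v * C₁ * min (min (a:ℝ) (b:ℝ)) (min (c:ℝ) (d:ℝ)) := by ring
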